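/- For a finite configuration of closed balls in the plane, the sum over all balls B(x,R) in the configuration of the length of the part of the sphere S(x,R) lying outside the union of the other balls equals the perimeter of the union of all the balls. -/

import Mathlib

open MeasureTheory Metric
open scoped ENNReal Classical

/-- The plane ℝ². -/
local notation "Plane" => EuclideanSpace ℝ (Fin 2)

/-- For a finite configuration of closed balls in general position,
the sum over the balls `B(x,R)` of the length (1-dimensional Hausdorff measure) of
the part of the sphere `S(x,R)` lying outside the union of the other balls equals
the perimeter (1-dimensional Hausdorff measure of the topological boundary) of the
union of all the balls. -/
theorem stmt_0 (ω : Finset (Plane × ℝ))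
    (hpos : ∀ p ∈ ω, 0 < p.2)
    (hgen : ∀ p ∈ ω, ∀ q ∈ ω, p ≠ q →
      (sphere p.1 p.2 ∩ sphere q.1 q.2).Finite) :
    ∑ p ∈ ω, μH[1] (sphere p.1 p.2 ∩ (⋃ q ∈ ω.erase p, closedBall q.1 q.2)ᶜ)
      = μH[1] (frontier (⋃ p ∈ ω, closedBall p.1 p.2)) := by
  classical
  set U : Set Plane := ⋃ p ∈ ω, closedBall p.1 p.2 with hUdef
  set A : Plane × ℝ → Set Plane :=
    fun p => sphere p.1 p.2 ∩ (⋃ q ∈ ω.erase p, closedBall q.1 q.2)ᶜ with hAdef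
  have hUclosed : IsClosed U := by
    apply Set.Finite.isClosed_biUnion ω.finite_toSet
    intro q _; exact isClosed_closedBall
  have hAmeas : ∀ p ∈ ω, MeasurableSet (A p) := by
    intro p _
    refine (isClosed_sphere).measurableSet.inter (MeasurableSet.compl ?_)
    refine (Set.Finite.isClosed_biUnion (ω.erase p).finite_toSet ?_).measurableSet
    intro q _; exact isClosed_closedBall
  -- the sets A p, p ∈ ω, are pairwise disjoint
  have hdisj : (↑ω : Set (Plane × ℝ)).PairwiseDisjoint A := by
    intro p hp q hq hpq
    rw [Function.onFun, Set.disjoint_left]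
    rintro x ⟨hxs, hxc⟩ ⟨hxs', hxc'⟩
    exact hxc (Set.mem_biUnion (Finset.mem_erase.2 ⟨fun h => hpq h.symm, hq⟩)
      (sphere_subset_closedBall hxs'))
  -- each A p is contained in the frontier of U
  have hsub : ∀ p ∈ ω, A p ⊆ frontier U := by
    intro p hp x hx
    obtain ⟨hxs, hxc⟩ := hx
    have hxU : x ∈ U := Set.mem_biUnion hp (sphere_subset_closedBall hxs)
    have hR : 0 < p.2 := hpos p hp
    have hdx : dist x p.1 = p.2 := mem_sphere.1 hxs
    rw [frontier_eq_closure_inter_closure]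
    refine ⟨subset_closure hxU, ?_⟩
    rw [Metric.mem_closure_iff]
    intro ε hε
    -- x is outside the closed set K of other balls
    have hKclosed : IsClosed (⋃ q ∈ ω.erase p, closedBall q.1 q.2) := by
      apply Set.Finite.isClosed_biUnion (ω.erase p).finite_toSet
      intro q _; exact isClosed_closedBall
    obtain ⟨δ, hδ, hball⟩ := Metric.isOpen_iff.1 hKclosed.isOpen_compl x hxc
    set t : ℝ := min ε δ / 2 with ht_def
    have ht : 0 < t := by positivity
    have htε : t < ε := by
      have : min ε δ ≤ ε := min_le_left _ _
      simp only [ht_def]; linarith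
    have htδ : t < δ := by
      have : min ε δ ≤ δ := min_le_right _ _
      simp only [ht_def]; linarith
    set y : Plane := x + (t / p.2) • (x - p.1) with hy_def
    have hnorm : ‖x - p.1‖ = p.2 := by rw [← dist_eq_norm]; exact hdx
    have hdyx : dist y x = t := by
      rw [hy_def, dist_eq_norm]
      have : x + (t / p.2) • (x - p.1) - x = (t / p.2) • (x - p.1) := by abel
      rw [this, norm_smul, hnorm, Real.norm_eq_abs, abs_of_pos (by positivity)]
      field_simp
    have hdyp : dist y p.1 = p.2 + t := by
      rw [hy_def, dist_eq_norm]
      have : x + (t / p.2) • (x - p.1) - p.1 = (1 + t / p.2) • (x - p.1) := by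
        rw [add_smul, one_smul]; abel
      rw [this, norm_smul, hnorm, Real.norm_eq_abs, abs_of_pos (by positivity)]
      field_simp
    refine ⟨y, ?_, by rw [dist_comm]; rw [hdyx]; exact htε⟩
    -- y is outside U
    intro hyU
    rw [hUdef] at hyU
    obtain ⟨q, hq, hyq⟩ := Set.mem_iUnion₂.1 hyU
    by_cases hqp : q = p
    · subst hqp
      rw [mem_closedBall, hdyp] at hyq
      linarith
    · have hyK : y ∈ ⋃ q ∈ ω.erase p, closedBall q.1 q.2 :=
        Set.mem_biUnion (Finset.mem_erase.2 ⟨hqp, hq⟩) hyq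
      have : y ∈ ball x δ := by rw [mem_ball]; rw [hdyx]; exact htδ
      exact hball this hyK
  -- the finite exceptional set of sphere-sphere intersections
  set F : Set Plane := ⋃ p ∈ ω, ⋃ q ∈ ω.erase p, sphere p.1 p.2 ∩ sphere q.1 q.2 with hFdef
  have hFfin : F.Finite := by
    apply Set.Finite.biUnion ω.finite_toSet
    intro p hp
    apply Set.Finite.biUnion (ω.erase p).finite_toSet
    intro q hq
    exact hgen p hp q (Finset.mem_of_mem_erase hq) (fun h => (Finset.mem_erase.1 hq).1 h.symm)
  -- the frontier is contained in the union of the A p together with F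
  have hFr : frontier U ⊆ (⋃ p ∈ ω, A p) ∪ F := by
    intro x hx
    rw [hUclosed.frontier_eq] at hx
    obtain ⟨hxU, hxint⟩ := hx
    have hnball : ∀ q ∈ ω, x ∉ ball q.1 q.2 := by
      intro q hq hxb
      apply hxint
      have hsubU : ball q.1 q.2 ⊆ U := by
        intro z hz
        exact Set.mem_biUnion hq (ball_subset_closedBall hz)
      exact interior_maximal hsubU isOpen_ball hxb
    obtain ⟨p, hp, hxp⟩ := Set.mem_iUnion₂.1 hxU
    have hxsp : x ∈ sphere p.1 p.2 := mem_sphere.2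
      (le_antisymm (mem_closedBall.1 hxp) (not_lt.1 fun h => hnball p hp (mem_ball.2 h)))
    by_cases hq : ∃ q ∈ ω.erase p, x ∈ closedBall q.1 q.2
    · obtain ⟨q, hq, hxq⟩ := hq
      have hqω : q ∈ ω := Finset.mem_of_mem_erase hq
      have hxsq : x ∈ sphere q.1 q.2 := mem_sphere.2
        (le_antisymm (mem_closedBall.1 hxq) (not_lt.1 fun h => hnball q hqω (mem_ball.2 h)))
      exact Or.inr (Set.mem_biUnion hp (Set.mem_biUnion hq ⟨hxsp, hxsq⟩))
    · push_neg at hq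
      refine Or.inl (Set.mem_biUnion hp ⟨hxsp, ?_⟩)
      intro hxK
      obtain ⟨q, hq', hxq⟩ := Set.mem_iUnion₂.1 hxK
      exact hq q hq' hxq
  -- Hausdorff measure of F is zero
  haveI : NullSingletonClass (μH[1] : Measure Plane) :=
    MeasureTheory.Measure.nullSingletonClass_hausdorff Plane one_pos
  have hF0 : μH[1] F = 0 := hFfin.measure_zero _
  have key : μH[1] (⋃ p ∈ ω, A p) = μH[1] (frontier U) := by
    apply le_antisymm
    · exact measure_mono (Set.iUnion₂_subset hsub)
    · calc μH[1] (frontier U) ≤ μH[1] ((⋃ p ∈ ω, A p) ∪ F) := measure_mono hFr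
        _ ≤ μH[1] (⋃ p ∈ ω, A p) + μH[1] F := measure_union_le _ _
        _ = μH[1] (⋃ p ∈ ω, A p) := by rw [hF0, add_zero]
  rw [← key, measure_biUnion_finset hdisj hAmeas]
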